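/- Let ξ, ν ∈ ℝ² with |ξ| = |ν| = 1 and ξ · ν = 0, and let u, v ∈ ℂ² with Im⟨u, v⟩ ≠ 0 (where ⟨u,v⟩ = Σ u_i conj(v_i)). Then Re Σ_{i,j,k,l=1}^2 a_{ij}^{kl} (ξ_l u_j − ν_l v_j) conj(ξ_k u_i − ν_k v_i) > 0, for the principal coefficients a_{ij}^{kl} of Hibler's operator at a fixed symmetric ε, with P > 0 and δ > 0. -/

import Mathlib

open Finset Real Matrix

/-- Hibler's quadratic form `Δ²(d)`. -/
noncomputable def Dsq (e : ℝ) (d : Matrix (Fin 2) (Fin 2) ℝ) : ℝ :=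
  (d 0 0 + d 1 1)^2 + (1/e^2)*(d 0 0 - d 1 1)^2 + (1/e^2)*(d 0 1 + d 1 0)^2

/-- The 4×4 matrix representing Hibler's map `𝕊`. -/
noncomputable def S4 (e : ℝ) : Matrix (Fin 4) (Fin 4) ℝ :=
  !![1+1/e^2, 0, 0, 1-1/e^2;
     0, 1/e^2, 1/e^2, 0;
     0, 1/e^2, 1/e^2, 0;
     1-1/e^2, 0, 0, 1+1/e^2]

/-- Identification of a 2×2 matrix with a vector in ℝ⁴. -/
def vec4 (d : Matrix (Fin 2) (Fin 2) ℝ) : Fin 4 → ℝ := ![d 0 0, d 0 1, d 1 0, d 1 1]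

/-- Pair index `(i,k) ↦ 2i+k`. -/
def pidx (i k : Fin 2) : Fin 4 := ⟨2*i.1 + k.1, by have := i.2; have := k.2; omega⟩

/-- Hibler's tensor `𝕊_{ij}^{kl}`. -/
noncomputable def Sten (e : ℝ) (i j k l : Fin 2) : ℝ := S4 e (pidx i k) (pidx j l)

/-- The matrix `𝕊ε`. -/
noncomputable def Smap (e : ℝ) (ε : Matrix (Fin 2) (Fin 2) ℝ) : Matrix (Fin 2) (Fin 2) ℝ :=
  fun i k => ∑ j : Fin 2, ∑ l : Fin 2, Sten e i j k l * ε j l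

/-- Regularized `Δ_δ(ε) = √(δ + Δ²(ε))`. -/
noncomputable def Ddel (e δ : ℝ) (ε : Matrix (Fin 2) (Fin 2) ℝ) : ℝ :=
  Real.sqrt (δ + Dsq e ε)

/-- Principal coefficients `a_{ij}^{kl}` of Hibler's operator. -/
noncomputable def aCoef (e δ P : ℝ) (ε : Matrix (Fin 2) (Fin 2) ℝ) (i j k l : Fin 2) : ℝ :=
  P/(2*Ddel e δ ε) * (Sten e i j k l - (1/(Ddel e δ ε)^2) * Smap e ε i k * Smap e ε j l)


noncomputable def Qf (e δ P : ℝ) (ε d : Matrix (Fin 2) (Fin 2) ℝ) : ℝ :=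
  ∑ i : Fin 2, ∑ j : Fin 2, ∑ k : Fin 2, ∑ l : Fin 2, aCoef e δ P ε i j k l * d j l * d i k

lemma StenV0000 (e : ℝ) : Sten e 0 0 0 0 = 1+1/e^2 := by
  show S4 e (pidx 0 0) (pidx 0 0) = _
  norm_num [S4, pidx, show ((⟨0,by omega⟩ : Fin 4)) = 0 from rfl, show ((⟨1,by omega⟩ : Fin 4)) = 1 from rfl, show ((⟨2,by omega⟩ : Fin 4)) = 2 from rfl, show ((⟨3,by omega⟩ : Fin 4)) = 3 from rfl]
lemma StenV0001 (e : ℝ) : Sten e 0 0 0 1 = 0 := by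
  show S4 e (pidx 0 0) (pidx 0 1) = _
  norm_num [S4, pidx, show ((⟨0,by omega⟩ : Fin 4)) = 0 from rfl, show ((⟨1,by omega⟩ : Fin 4)) = 1 from rfl, show ((⟨2,by omega⟩ : Fin 4)) = 2 from rfl, show ((⟨3,by omega⟩ : Fin 4)) = 3 from rfl]
lemma StenV0100 (e : ℝ) : Sten e 0 1 0 0 = 0 := by
  show S4 e (pidx 0 0) (pidx 1 0) = _
  norm_num [S4, pidx, show ((⟨0,by omega⟩ : Fin 4)) = 0 from rfl, show ((⟨1,by omega⟩ : Fin 4)) = 1 from rfl, show ((⟨2,by omega⟩ : Fin 4)) = 2 from rfl, show ((⟨3,by omega⟩ : Fin 4)) = 3 from rfl] <;> rfl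
lemma StenV0101 (e : ℝ) : Sten e 0 1 0 1 = 1-1/e^2 := by
  show S4 e (pidx 0 0) (pidx 1 1) = _
  norm_num [S4, pidx, show ((⟨0,by omega⟩ : Fin 4)) = 0 from rfl, show ((⟨1,by omega⟩ : Fin 4)) = 1 from rfl, show ((⟨2,by omega⟩ : Fin 4)) = 2 from rfl, show ((⟨3,by omega⟩ : Fin 4)) = 3 from rfl] <;> rfl
lemma StenV0010 (e : ℝ) : Sten e 0 0 1 0 = 0 := by
  show S4 e (pidx 0 1) (pidx 0 0) = _
  norm_num [S4, pidx, show ((⟨0,by omega⟩ : Fin 4)) = 0 from rfl, show ((⟨1,by omega⟩ : Fin 4)) = 1 from rfl, show ((⟨2,by omega⟩ : Fin 4)) = 2 from rfl, show ((⟨3,by omega⟩ : Fin 4)) = 3 from rfl]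
lemma StenV0011 (e : ℝ) : Sten e 0 0 1 1 = 1/e^2 := by
  show S4 e (pidx 0 1) (pidx 0 1) = _
  norm_num [S4, pidx, show ((⟨0,by omega⟩ : Fin 4)) = 0 from rfl, show ((⟨1,by omega⟩ : Fin 4)) = 1 from rfl, show ((⟨2,by omega⟩ : Fin 4)) = 2 from rfl, show ((⟨3,by omega⟩ : Fin 4)) = 3 from rfl]
lemma StenV0110 (e : ℝ) : Sten e 0 1 1 0 = 1/e^2 := by
  show S4 e (pidx 0 1) (pidx 1 0) = _
  norm_num [S4, pidx, show ((⟨0,by omega⟩ : Fin 4)) = 0 from rfl, show ((⟨1,by omega⟩ : Fin 4)) = 1 from rfl, show ((⟨2,by omega⟩ : Fin 4)) = 2 from rfl, show ((⟨3,by omega⟩ : Fin 4)) = 3 from rfl] <;> rfl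
lemma StenV0111 (e : ℝ) : Sten e 0 1 1 1 = 0 := by
  show S4 e (pidx 0 1) (pidx 1 1) = _
  norm_num [S4, pidx, show ((⟨0,by omega⟩ : Fin 4)) = 0 from rfl, show ((⟨1,by omega⟩ : Fin 4)) = 1 from rfl, show ((⟨2,by omega⟩ : Fin 4)) = 2 from rfl, show ((⟨3,by omega⟩ : Fin 4)) = 3 from rfl] <;> rfl
lemma StenV1000 (e : ℝ) : Sten e 1 0 0 0 = 0 := by
  show S4 e (pidx 1 0) (pidx 0 0) = _
  norm_num [S4, pidx, show ((⟨0,by omega⟩ : Fin 4)) = 0 from rfl, show ((⟨1,by omega⟩ : Fin 4)) = 1 from rfl, show ((⟨2,by omega⟩ : Fin 4)) = 2 from rfl, show ((⟨3,by omega⟩ : Fin 4)) = 3 from rfl] <;> rfl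
lemma StenV1001 (e : ℝ) : Sten e 1 0 0 1 = 1/e^2 := by
  show S4 e (pidx 1 0) (pidx 0 1) = _
  norm_num [S4, pidx, show ((⟨0,by omega⟩ : Fin 4)) = 0 from rfl, show ((⟨1,by omega⟩ : Fin 4)) = 1 from rfl, show ((⟨2,by omega⟩ : Fin 4)) = 2 from rfl, show ((⟨3,by omega⟩ : Fin 4)) = 3 from rfl] <;> rfl
lemma StenV1100 (e : ℝ) : Sten e 1 1 0 0 = 1/e^2 := by
  show S4 e (pidx 1 0) (pidx 1 0) = _
  norm_num [S4, pidx, show ((⟨0,by omega⟩ : Fin 4)) = 0 from rfl, show ((⟨1,by omega⟩ : Fin 4)) = 1 from rfl, show ((⟨2,by omega⟩ : Fin 4)) = 2 from rfl, show ((⟨3,by omega⟩ : Fin 4)) = 3 from rfl] <;> rfl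
lemma StenV1101 (e : ℝ) : Sten e 1 1 0 1 = 0 := by
  show S4 e (pidx 1 0) (pidx 1 1) = _
  norm_num [S4, pidx, show ((⟨0,by omega⟩ : Fin 4)) = 0 from rfl, show ((⟨1,by omega⟩ : Fin 4)) = 1 from rfl, show ((⟨2,by omega⟩ : Fin 4)) = 2 from rfl, show ((⟨3,by omega⟩ : Fin 4)) = 3 from rfl] <;> rfl
lemma StenV1010 (e : ℝ) : Sten e 1 0 1 0 = 1-1/e^2 := by
  show S4 e (pidx 1 1) (pidx 0 0) = _
  norm_num [S4, pidx, show ((⟨0,by omega⟩ : Fin 4)) = 0 from rfl, show ((⟨1,by omega⟩ : Fin 4)) = 1 from rfl, show ((⟨2,by omega⟩ : Fin 4)) = 2 from rfl, show ((⟨3,by omega⟩ : Fin 4)) = 3 from rfl] <;> rfl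
lemma StenV1011 (e : ℝ) : Sten e 1 0 1 1 = 0 := by
  show S4 e (pidx 1 1) (pidx 0 1) = _
  norm_num [S4, pidx, show ((⟨0,by omega⟩ : Fin 4)) = 0 from rfl, show ((⟨1,by omega⟩ : Fin 4)) = 1 from rfl, show ((⟨2,by omega⟩ : Fin 4)) = 2 from rfl, show ((⟨3,by omega⟩ : Fin 4)) = 3 from rfl] <;> rfl
lemma StenV1110 (e : ℝ) : Sten e 1 1 1 0 = 0 := by
  show S4 e (pidx 1 1) (pidx 1 0) = _
  norm_num [S4, pidx, show ((⟨0,by omega⟩ : Fin 4)) = 0 from rfl, show ((⟨1,by omega⟩ : Fin 4)) = 1 from rfl, show ((⟨2,by omega⟩ : Fin 4)) = 2 from rfl, show ((⟨3,by omega⟩ : Fin 4)) = 3 from rfl] <;> rfl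
lemma StenV1111 (e : ℝ) : Sten e 1 1 1 1 = 1+1/e^2 := by
  show S4 e (pidx 1 1) (pidx 1 1) = _
  norm_num [S4, pidx, show ((⟨0,by omega⟩ : Fin 4)) = 0 from rfl, show ((⟨1,by omega⟩ : Fin 4)) = 1 from rfl, show ((⟨2,by omega⟩ : Fin 4)) = 2 from rfl, show ((⟨3,by omega⟩ : Fin 4)) = 3 from rfl] <;> rfl

lemma wCS (w : ℝ) (hw : 0 ≤ w) (a b c a' b' c' : ℝ) :
    (a*a' + w*((b*b')) + w*((c*c')))^2 ≤ (a^2 + w*b^2 + w*c^2) * (a'^2 + w*b'^2 + w*c'^2) := by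
  nlinarith [mul_nonneg hw (sq_nonneg (a*b'-b*a')), mul_nonneg hw (sq_nonneg (a*c'-c*a')),
    mul_nonneg (mul_nonneg hw hw) (sq_nonneg (b*c'-c*b'))]

lemma B_eq (e : ℝ) (ε d : Matrix (Fin 2) (Fin 2) ℝ) :
    ∑ i : Fin 2, ∑ k : Fin 2, Smap e ε i k * d i k =
    (d 0 0 + d 1 1)*((ε 0 0 + ε 1 1)) + (1/e^2)*((d 0 0 - d 1 1)*(ε 0 0 - ε 1 1))
      + (1/e^2)*((d 0 1 + d 1 0)*(ε 0 1 + ε 1 0)) := by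
  simp only [Smap, Fin.sum_univ_two, StenV0000, StenV0001, StenV0100, StenV0101, StenV0010, StenV0011, StenV0110, StenV0111, StenV1000, StenV1001, StenV1100, StenV1101, StenV1010, StenV1011, StenV1110, StenV1111]
  ring

set_option maxHeartbeats 1000000 in
lemma Q_eq (e δ P : ℝ) (ε d : Matrix (Fin 2) (Fin 2) ℝ) (hΔ : Ddel e δ ε ≠ 0) :
    Qf e δ P ε d = P/(2*Ddel e δ ε) * Dsq e d
      - P/(2*(Ddel e δ ε)^3) * (∑ i : Fin 2, ∑ k : Fin 2, Smap e ε i k * d i k)^2 := by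
  simp only [Qf, aCoef, Fin.sum_univ_two, StenV0000, StenV0001, StenV0100, StenV0101, StenV0010, StenV0011, StenV0110, StenV0111, StenV1000, StenV1001, StenV1100, StenV1101, StenV1010, StenV1011, StenV1110, StenV1111, Dsq]
  field_simp
  ring

lemma Qlb (e δ P : ℝ) (hδ : 0 < δ) (hP : 0 < P) (ε d : Matrix (Fin 2) (Fin 2) ℝ) :
    P*δ/(2*(Ddel e δ ε)^3) * Dsq e d ≤ Qf e δ P ε d := by
  have hDε : 0 ≤ Dsq e ε := by unfold Dsq; positivity
  have hΔpos : 0 < Ddel e δ ε := Real.sqrt_pos.2 (by linarith)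
  have hΔsq : (Ddel e δ ε)^2 = δ + Dsq e ε := Real.sq_sqrt (by linarith)
  set Δ := Ddel e δ ε with hΔdef
  set B := ∑ i : Fin 2, ∑ k : Fin 2, Smap e ε i k * d i k with hBdef
  have hDd : 0 ≤ Dsq e d := by unfold Dsq; positivity
  have hCS : B^2 ≤ Dsq e d * Dsq e ε := by
    rw [hBdef, B_eq]
    have := wCS (1/e^2) (by positivity) (d 0 0 + d 1 1) (d 0 0 - d 1 1) (d 0 1 + d 1 0)
      (ε 0 0 + ε 1 1) (ε 0 0 - ε 1 1) (ε 0 1 + ε 1 0)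
    unfold Dsq
    linarith
  have key : 0 ≤ P*Δ^2*Dsq e d - P*B^2 - P*δ*Dsq e d := by
    have h2 : P*B^2 ≤ P*(Dsq e d * Dsq e ε) := by nlinarith
    have h3 : P*Δ^2*Dsq e d = P*δ*Dsq e d + P*(Dsq e d * Dsq e ε) := by rw [hΔsq]; ring
    linarith
  have hfr : Qf e δ P ε d - P*δ/(2*Δ^3) * Dsq e d
      = (P*Δ^2*Dsq e d - P*B^2 - P*δ*Dsq e d)/(2*Δ^3) := by
    rw [Q_eq e δ P ε d (ne_of_gt hΔpos), ← hBdef, ← hΔdef]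
    field_simp
  have h4 := div_nonneg key (by positivity : (0:ℝ) ≤ 2*Δ^3)
  linarith [hfr ▸ h4]

lemma imzero (a b n0 n1 x0 x1 xt0 xt1 y0 y1 yt0 yt1 : ℝ)
    (hξ : a^2 + b^2 = 1) (hν : n0^2 + n1^2 = 1) (horth : a*n0 + b*n1 = 0)
    (hx0 : a*x0 - n0*xt0 = 0) (hx1 : b*x1 - n1*xt1 = 0)
    (hy0 : a*y0 - n0*yt0 = 0) (hy1 : b*y1 - n1*yt1 = 0) :
    y0*xt0 - x0*yt0 + (y1*xt1 - x1*yt1) = 0 := by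
  have hA : n0^2 = b^2 := by linear_combination b^2*hν - n0^2*hξ + (a*n0 - b*n1)*horth
  have hB : n1^2 = a^2 := by linarith
  have hX0 : x0 = n0*(n0*x0 + a*xt0) := by linear_combination (-x0)*hA + (-x0)*hξ + a*hx0
  have hXt0 : xt0 = a*(n0*x0 + a*xt0) := by linear_combination (-xt0)*hA + (-xt0)*hξ + (-n0)*hx0
  have hX1 : x1 = n1*(n1*x1 + b*xt1) := by linear_combination (-x1)*hB + (-x1)*hξ + b*hx1
  have hXt1 : xt1 = b*(n1*x1 + b*xt1) := by linear_combination (-xt1)*hB + (-xt1)*hξ + (-n1)*hx1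
  have hY0 : y0 = n0*(n0*y0 + a*yt0) := by linear_combination (-y0)*hA + (-y0)*hξ + a*hy0
  have hYt0 : yt0 = a*(n0*y0 + a*yt0) := by linear_combination (-yt0)*hA + (-yt0)*hξ + (-n0)*hy0
  have hY1 : y1 = n1*(n1*y1 + b*yt1) := by linear_combination (-y1)*hB + (-y1)*hξ + b*hy1
  have hYt1 : yt1 = b*(n1*y1 + b*yt1) := by linear_combination (-yt1)*hB + (-yt1)*hξ + (-n1)*hy1
  linear_combination xt0*hY0 + (n0*(n0*y0 + a*yt0))*hXt0 - yt0*hX0 - (n0*(n0*x0 + a*xt0))*hYt0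
    + xt1*hY1 + (n1*(n1*y1 + b*yt1))*hXt1 - yt1*hX1 - (n1*(n1*x1 + b*xt1))*hYt1

lemma extract2 (w A B C : ℝ) (hw : 0 < w)
    (h : (A + B)^2 + w*(A - B)^2 + w*C^2 = 0) : A = 0 ∧ B = 0 := by
  have h1 : (A + B)^2 = 0 := by nlinarith [sq_nonneg (A+B), mul_nonneg hw.le (sq_nonneg (A-B)), mul_nonneg hw.le (sq_nonneg C)]
  have h2 : (A - B)^2 = 0 := by nlinarith [sq_nonneg (A-B), sq_nonneg (A+B), mul_nonneg hw.le (sq_nonneg C)]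
  have h1' : A + B = 0 := by
    have := sq_nonneg (A+B); nlinarith [sq_nonneg (A+B)]
  have h2' : A - B = 0 := by nlinarith [sq_nonneg (A-B)]
  constructor <;> linarith

lemma sumDsq_pos (e : ℝ) (he : 0 < e) (ξ ν : Fin 2 → ℝ)
    (hξ : ξ 0^2 + ξ 1^2 = 1) (hν : ν 0^2 + ν 1^2 = 1)
    (horth : ξ 0 * ν 0 + ξ 1 * ν 1 = 0) (u v : Fin 2 → ℂ)
    (hIm : (u 0 * (starRingEnd ℂ) (v 0) + u 1 * (starRingEnd ℂ) (v 1)).im ≠ 0) :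
    0 < Dsq e (fun i k => ξ k * (u i).re - ν k * (v i).re)
      + Dsq e (fun i k => ξ k * (u i).im - ν k * (v i).im) := by
  have hDxn : 0 ≤ Dsq e (fun i k => ξ k * (u i).re - ν k * (v i).re) := by
    unfold Dsq; positivity
  have hDyn : 0 ≤ Dsq e (fun i k => ξ k * (u i).im - ν k * (v i).im) := by
    unfold Dsq; positivity
  rcases lt_or_eq_of_le (by linarith : (0:ℝ) ≤ Dsq e (fun i k => ξ k * (u i).re - ν k * (v i).re)
      + Dsq e (fun i k => ξ k * (u i).im - ν k * (v i).im)) with h | h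
  · exact h
  exfalso
  have h0x : Dsq e (fun i k => ξ k * (u i).re - ν k * (v i).re) = 0 := by linarith
  have h0y : Dsq e (fun i k => ξ k * (u i).im - ν k * (v i).im) = 0 := by linarith
  simp only [Dsq] at h0x h0y
  have hw : 0 < 1/e^2 := by positivity
  obtain ⟨hx0, hx1⟩ := extract2 (1/e^2) (ξ 0 * (u 0).re - ν 0 * (v 0).re)
    (ξ 1 * (u 1).re - ν 1 * (v 1).re)
    (ξ 1 * (u 0).re - ν 1 * (v 0).re + (ξ 0 * (u 1).re - ν 0 * (v 1).re)) hw (by linarith [h0x])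
  obtain ⟨hy0, hy1⟩ := extract2 (1/e^2) (ξ 0 * (u 0).im - ν 0 * (v 0).im)
    (ξ 1 * (u 1).im - ν 1 * (v 1).im)
    (ξ 1 * (u 0).im - ν 1 * (v 0).im + (ξ 0 * (u 1).im - ν 0 * (v 1).im)) hw (by linarith [h0y])
  apply hIm
  have hz := imzero (ξ 0) (ξ 1) (ν 0) (ν 1) (u 0).re (u 1).re (v 0).re (v 1).re
    (u 0).im (u 1).im (v 0).im (v 1).im hξ hν horth hx0 hx1 hy0 hy1
  simp only [Complex.add_im, Complex.mul_im, Complex.conj_re, Complex.conj_im]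
  linarith [hz]

set_option maxHeartbeats 4000000 in
/-- strict positivity in the Lopatinskii–Shapiro condition when
Im⟨u,v⟩ ≠ 0. -/
theorem hibler_ls_pos (e δ P : ℝ) (he : 0 < e) (hδ : 0 < δ) (hP : 0 < P)
    (ε : Matrix (Fin 2) (Fin 2) ℝ) (hε : ε.IsSymm)
    (ξ ν : Fin 2 → ℝ) (hξ : ξ 0^2 + ξ 1^2 = 1) (hν : ν 0^2 + ν 1^2 = 1)
    (horth : ξ 0 * ν 0 + ξ 1 * ν 1 = 0) (u v : Fin 2 → ℂ)
    (hIm : (u 0 * (starRingEnd ℂ) (v 0) + u 1 * (starRingEnd ℂ) (v 1)).im ≠ 0) :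
    0 < (∑ i : Fin 2, ∑ j : Fin 2, ∑ k : Fin 2, ∑ l : Fin 2,
        (aCoef e δ P ε i j k l : ℂ) * ((ξ l : ℂ) * u j - (ν l : ℂ) * v j)
          * (starRingEnd ℂ) ((ξ k : ℂ) * u i - (ν k : ℂ) * v i)).re := by
  have hDε : 0 ≤ Dsq e ε := by unfold Dsq; positivity
  have hΔpos : 0 < Ddel e δ ε := Real.sqrt_pos.2 (by linarith)
  have hre : (∑ i : Fin 2, ∑ j : Fin 2, ∑ k : Fin 2, ∑ l : Fin 2,
        (aCoef e δ P ε i j k l : ℂ) * ((ξ l : ℂ) * u j - (ν l : ℂ) * v j)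
          * (starRingEnd ℂ) ((ξ k : ℂ) * u i - (ν k : ℂ) * v i)).re
      = Qf e δ P ε (fun i k => ξ k * (u i).re - ν k * (v i).re)
        + Qf e δ P ε (fun i k => ξ k * (u i).im - ν k * (v i).im) := by
    simp only [Qf, Fin.sum_univ_two, _root_.map_sub, _root_.map_mul, Complex.conj_ofReal,
      Complex.add_re, Complex.sub_re, Complex.sub_im, Complex.mul_re, Complex.mul_im,
      Complex.ofReal_re, Complex.ofReal_im, Complex.conj_re, Complex.conj_im]
    ring
  have hlbx := Qlb e δ P hδ hP ε (fun i k => ξ k * (u i).re - ν k * (v i).re)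
  have hlby := Qlb e δ P hδ hP ε (fun i k => ξ k * (u i).im - ν k * (v i).im)
  have hc : 0 < P*δ/(2*(Ddel e δ ε)^3) := by positivity
  have hpos := sumDsq_pos e he ξ ν hξ hν horth u v hIm
  rw [hre]
  nlinarith [mul_pos hc hpos, hlbx, hlby]
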